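/- If E is a real inner product space, S ⊆ E, z ∈ S, and x₁, x₂ are two points of E both having z as a nearest point in S, then every point on the segment from x₁ to x₂ also has z as a nearest point in S; i.e., for t ∈ [0,1], ‖(t•x₁ + (1-t)•x₂) - z‖ ≤ ‖(t•x₁ + (1-t)•x₂) - y‖ for all y ∈ S. -/

import Mathlib

theorem stmt1 {E : Type*} [NormedAddCommGroup E] [InnerProductSpace ℝ E]
    (S : Set E) (z : E) (hz : z ∈ S) (x₁ x₂ : E)
    (h₁ : ∀ y ∈ S, ‖x₁ - z‖ ≤ ‖x₁ - y‖)
    (h₂ : ∀ y ∈ S, ‖x₂ - z‖ ≤ ‖x₂ - y‖)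
    (t : ℝ) (ht : t ∈ Set.Icc (0 : ℝ) 1) :
    ∀ y ∈ S, ‖(t • x₁ + (1 - t) • x₂) - z‖ ≤ ‖(t • x₁ + (1 - t) • x₂) - y‖ := by
  intro y hy
  obtain ⟨ht0, ht1⟩ := ht
  have key : ∀ x : E, (‖x - z‖ ≤ ‖x - y‖ ↔
      2 * inner ℝ x (y - z) ≤ ‖y‖ ^ 2 - ‖z‖ ^ 2) := by
    intro x
    rw [← pow_le_pow_iff_left₀ (norm_nonneg _) (norm_nonneg _) two_ne_zero,
      norm_sub_sq_real, norm_sub_sq_real, inner_sub_right]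
    constructor <;> intro h <;> nlinarith
  have e1 := (key _).mp (h₁ y hy)
  have e2 := (key _).mp (h₂ y hy)
  rw [key]
  have expand : (inner ℝ (t • x₁ + (1 - t) • x₂) (y - z) : ℝ)
      = t * inner ℝ x₁ (y - z) + (1 - t) * inner ℝ x₂ (y - z) := by
    rw [inner_add_left, real_inner_smul_left, real_inner_smul_left]
  rw [expand]
  nlinarith
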